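/- arXiv:1307.0800 — 3 statements merged into one kernel-verified Lean document; each statement's English description precedes it below -/
import Mathlib

section
/- Let T ≥ 1 and for each t ∈ {1,…,T} let C_t : ℝ → ℝ be convex with C_t(0) = 0. For a vector S = (S_0,…,S_T) let x_t(S) = S_t − S_{t−1}. Suppose S* = (S*_0,…,S*_T) is feasible (i.e. 0 ≤ S*_t ≤ E for 1 ≤ t ≤ T−1) and there exists μ* = (μ*_1,…,μ*_T) such that: (ii) for each t, x_t(S*) minimises C_t(x) − μ*_t x over all x ∈ ℝ; and (iii) for 1 ≤ t ≤ T−1: μ*_{t+1} = μ*_t if 0 < S*_t < E, μ*_{t+1} ≤ μ*_t if S*_t = 0, and μ*_{t+1} ≥ μ*_t if S*_t = E. Then for every feasible S with S_0 = S*_0 and S_T = S*_T, one has ∑_{t=1}^T C_t(x_t(S*)) ≤ ∑_{t=1}^T C_t(x_t(S)). -/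
/-- Abel summation identity for telescoping sums with weights. -/
lemma abel_aux (μ d : ℕ → ℝ) :
    ∀ n, 1 ≤ n → ∑ t ∈ Finset.Icc 1 n, μ t * (d t - d (t - 1)) =
      μ n * d n - μ 1 * d 0 - ∑ t ∈ Finset.Icc 1 (n - 1), (μ (t + 1) - μ t) * d t := by
  intro n hn
  induction n, hn using Nat.le_induction with
  | base => simp [mul_sub]
  | succ n hn ih =>
    rw [Finset.sum_Icc_succ_top (by omega : 1 ≤ n + 1), ih]
    have h1 : n + 1 - 1 = n := rfl
    rw [h1]
    rw [show Finset.Icc 1 n = Finset.Icc 1 ((n - 1) + 1) by rw [Nat.sub_add_cancel hn]]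
    rw [Finset.sum_Icc_succ_top (by omega : 1 ≤ n - 1 + 1), Nat.sub_add_cancel hn]
    ring

/-- Lagrangian sufficiency theorem for the storage arbitrage problem P. -/
theorem lagrangian_sufficiency
    (T : ℕ) (hT : 1 ≤ T) (E : ℝ)
    (C : ℕ → ℝ → ℝ)
    (hconv : ∀ t, 1 ≤ t → t ≤ T → ConvexOn ℝ Set.univ (C t))
    (hC0 : ∀ t, 1 ≤ t → t ≤ T → C t 0 = 0)
    (Sstar μstar : ℕ → ℝ)
    (hfeas : ∀ t, 1 ≤ t → t ≤ T - 1 → 0 ≤ Sstar t ∧ Sstar t ≤ E)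
    (hmin : ∀ t, 1 ≤ t → t ≤ T → ∀ x : ℝ,
      C t (Sstar t - Sstar (t - 1)) - μstar t * (Sstar t - Sstar (t - 1)) ≤
        C t x - μstar t * x)
    (hcs : ∀ t, 1 ≤ t → t ≤ T - 1 →
      (0 < Sstar t ∧ Sstar t < E → μstar (t + 1) = μstar t) ∧
      (Sstar t = 0 → μstar (t + 1) ≤ μstar t) ∧
      (Sstar t = E → μstar t ≤ μstar (t + 1)))
    (S : ℕ → ℝ)
    (hS0 : S 0 = Sstar 0) (hST : S T = Sstar T)
    (hSfeas : ∀ t, 1 ≤ t → t ≤ T - 1 → 0 ≤ S t ∧ S t ≤ E) :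
    ∑ t ∈ Finset.Icc 1 T, C t (Sstar t - Sstar (t - 1)) ≤
      ∑ t ∈ Finset.Icc 1 T, C t (S t - S (t - 1)) := by
  set d : ℕ → ℝ := fun t => S t - Sstar t with hd
  -- The multiplier correction term is nonpositive
  have habel := abel_aux μstar d T hT
  have hd0 : d 0 = 0 := by simp [hd, hS0]
  have hdT : d T = 0 := by simp [hd, hST]
  have hterm : ∀ t ∈ Finset.Icc 1 (T - 1), (μstar (t + 1) - μstar t) * d t ≤ 0 := by
    intro t ht
    rw [Finset.mem_Icc] at ht
    obtain ⟨h1, h2⟩ := ht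
    obtain ⟨hcs1, hcs2, hcs3⟩ := hcs t h1 h2
    obtain ⟨hf1, hf2⟩ := hfeas t h1 h2
    obtain ⟨hg1, hg2⟩ := hSfeas t h1 h2
    rcases eq_or_lt_of_le hf1 with h0 | h0
    · -- Sstar t = 0
      have := hcs2 h0.symm
      have hdge : 0 ≤ -d t → True := fun _ => trivial
      have : (μstar (t + 1) - μstar t) ≤ 0 := by linarith
      have hdle : d t ≥ 0 := by simp [hd, ← h0]; linarith
      nlinarith
    rcases eq_or_lt_of_le hf2 with hE | hE
    · -- Sstar t = E
      have := hcs3 hE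
      have : 0 ≤ μstar (t + 1) - μstar t := by linarith
      have hdle : d t ≤ 0 := by simp [hd, hE]; linarith
      nlinarith
    · have := hcs1 ⟨h0, hE⟩
      have : μstar (t + 1) - μstar t = 0 := by linarith
      rw [this, zero_mul]
  have hsum_nonpos : ∑ t ∈ Finset.Icc 1 (T - 1), (μstar (t + 1) - μstar t) * d t ≤ 0 :=
    Finset.sum_nonpos hterm
  have hmult : 0 ≤ ∑ t ∈ Finset.Icc 1 T, μstar t * (d t - d (t - 1)) := by
    rw [habel, hd0, hdT]
    linarith
  -- Termwise Lagrangian bound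
  have key : ∀ t ∈ Finset.Icc 1 T,
      C t (Sstar t - Sstar (t - 1)) ≤
        C t (S t - S (t - 1)) - μstar t * (d t - d (t - 1)) := by
    intro t ht
    rw [Finset.mem_Icc] at ht
    have := hmin t ht.1 ht.2 (S t - S (t - 1))
    have hx : μstar t * (d t - d (t - 1)) =
        μstar t * (S t - S (t - 1)) - μstar t * (Sstar t - Sstar (t - 1)) := by
      simp [hd]; ring
    linarith
  calc ∑ t ∈ Finset.Icc 1 T, C t (Sstar t - Sstar (t - 1))
      ≤ ∑ t ∈ Finset.Icc 1 T, (C t (S t - S (t - 1)) - μstar t * (d t - d (t - 1))) :=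
        Finset.sum_le_sum key
    _ = ∑ t ∈ Finset.Icc 1 T, C t (S t - S (t - 1)) -
          ∑ t ∈ Finset.Icc 1 T, μstar t * (d t - d (t - 1)) := by
        rw [Finset.sum_sub_distrib]
    _ ≤ ∑ t ∈ Finset.Icc 1 T, C t (S t - S (t - 1)) := by linarith
end

section
/- Suppose each x*_t : ℝ → ℝ is monotone increasing and continuous, and S_t(μ) = S_0 + ∑_{u=1}^t x*_u(μ). If M (the set of μ whose trajectory first violates the constraints from below, as defined in the algorithm) is nonempty and bounded above with supremum μ̄, and if μ̄ ∈ M with first violation time T'(μ̄), then there exists t < T'(μ̄) with S_t(μ̄) = E. -/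
/-- The trajectory of store levels at constant reference price μ. -/
def storeTraj (xstar : ℕ → ℝ → ℝ) (S₀ : ℝ) (t : ℕ) (μ : ℝ) : ℝ :=
  S₀ + ∑ u ∈ Finset.Icc 1 t, xstar u μ

/-- M : the set of μ whose trajectory first violates the constraints from below. -/
def violatesBelow (xstar : ℕ → ℝ → ℝ) (S₀ E SstarT : ℝ) (T : ℕ) : Set ℝ :=
  {μ | ∃ T', 1 ≤ T' ∧ T' ≤ T ∧
    (∀ t, 1 ≤ t → t < T' → 0 ≤ storeTraj xstar S₀ t μ ∧ storeTraj xstar S₀ t μ ≤ E) ∧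
    (storeTraj xstar S₀ T' μ < 0 ∨ (T' = T ∧ storeTraj xstar S₀ T μ < SstarT))}

/-- If the supremum μ̄ of M itself lies in M, with first-violation witness T',
then the trajectory at μ̄ must touch the full level E strictly before T'. -/
theorem sup_violatesBelow_touches_full
    (T : ℕ) (hT : 1 ≤ T)
    (xstar : ℕ → ℝ → ℝ)
    (hmono : ∀ t, 1 ≤ t → t ≤ T → Monotone (xstar t))
    (hcont : ∀ t, 1 ≤ t → t ≤ T → Continuous (xstar t))
    (S₀ E SstarT : ℝ) (hE : 0 < E)
    (hne : (violatesBelow xstar S₀ E SstarT T).Nonempty)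
    (hbdd : BddAbove (violatesBelow xstar S₀ E SstarT T))
    (μbar : ℝ) (hμbar : μbar = sSup (violatesBelow xstar S₀ E SstarT T))
    (T' : ℕ) (hT'1 : 1 ≤ T') (hT'T : T' ≤ T)
    (hfeas : ∀ t, 1 ≤ t → t < T' →
      0 ≤ storeTraj xstar S₀ t μbar ∧ storeTraj xstar S₀ t μbar ≤ E)
    (hviol : storeTraj xstar S₀ T' μbar < 0 ∨
      (T' = T ∧ storeTraj xstar S₀ T μbar < SstarT)) :
    ∃ t, 1 ≤ t ∧ t < T' ∧ storeTraj xstar S₀ t μbar = E := by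
  by_contra h
  push_neg at h
  have hSmono : ∀ t, t ≤ T → Monotone (storeTraj xstar S₀ t) := by
    intro t ht a b hab
    exact add_le_add_right (Finset.sum_le_sum fun u hu =>
      hmono u (Finset.mem_Icc.mp hu).1 (le_trans (Finset.mem_Icc.mp hu).2 ht) hab) _
  have hScont : ∀ t, t ≤ T → Continuous (storeTraj xstar S₀ t) := fun t ht =>
    continuous_const.add (continuous_finset_sum _ fun u hu =>
      hcont u (Finset.mem_Icc.mp hu).1 (le_trans (Finset.mem_Icc.mp hu).2 ht))
  have hlt : ∀ t, 1 ≤ t → t < T' → storeTraj xstar S₀ t μbar < E :=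
    fun t h1 h2 => lt_of_le_of_ne (hfeas t h1 h2).2 (h t h1 h2)
  set V : Set ℝ := {μ | storeTraj xstar S₀ T' μ < 0 ∨
      (T' = T ∧ storeTraj xstar S₀ T μ < SstarT)} with hV
  have hVopen : IsOpen V := by
    have h1 : IsOpen {μ | storeTraj xstar S₀ T' μ < 0} :=
      isOpen_lt (hScont T' hT'T) continuous_const
    have h2 : IsOpen {μ : ℝ | T' = T ∧ storeTraj xstar S₀ T μ < SstarT} := by
      by_cases hc : T' = T
      · have : {μ : ℝ | T' = T ∧ storeTraj xstar S₀ T μ < SstarT}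
            = {μ | storeTraj xstar S₀ T μ < SstarT} := by
          ext μ; simp [hc]
        rw [this]; exact isOpen_lt (hScont T le_rfl) continuous_const
      · have : {μ : ℝ | T' = T ∧ storeTraj xstar S₀ T μ < SstarT} = ∅ := by
          ext μ; simp [hc]
        rw [this]; exact isOpen_empty
    exact h1.union h2
  set W : Set ℝ := (⋂ t ∈ Finset.Ico 1 T', {μ | storeTraj xstar S₀ t μ < E}) ∩ V with hW
  have hWopen : IsOpen W := by
    refine IsOpen.inter (isOpen_biInter_finset fun t ht => ?_) hVopen
    have ht' := Finset.mem_Ico.mp ht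
    exact isOpen_lt (hScont t (le_trans (le_of_lt ht'.2) hT'T)) continuous_const
  have hμW : μbar ∈ W := by
    constructor
    · refine Set.mem_biInter fun t ht => ?_
      have ht' := Finset.mem_Ico.mp ht
      exact hlt t ht'.1 ht'.2
    · exact hviol
  obtain ⟨ε, hε, hball⟩ := Metric.isOpen_iff.mp hWopen μbar hμW
  set μ' : ℝ := μbar + ε / 2 with hμ'
  have hμ'W : μ' ∈ W := by
    apply hball
    simp only [Metric.mem_ball, Real.dist_eq, hμ']
    rw [add_sub_cancel_left, abs_of_pos (by linarith)]
    linarith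
  have hle : μbar ≤ μ' := by simp [hμ']; linarith
  have hμ'M : μ' ∈ violatesBelow xstar S₀ E SstarT T := by
    refine ⟨T', hT'1, hT'T, fun t h1 h2 => ⟨?_, ?_⟩, hμ'W.2⟩
    · exact le_trans (hfeas t h1 h2).1
        (hSmono t (le_trans (le_of_lt h2) hT'T) hle)
    · have hmem : μ' ∈ {μ | storeTraj xstar S₀ t μ < E} :=
        Set.mem_iInter₂.mp hμ'W.1 t (Finset.mem_Ico.mpr ⟨h1, h2⟩)
      exact le_of_lt hmem
  have : μ' ≤ μbar := hμbar ▸ le_csSup hbdd hμ'M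
  rw [hμ'] at this
  linarith
end

section
/- In the storage algorithm, suppose at stage i the supremum μ̄_i of M_i lies in M_i (case (b)), and the construction sets S*_t = S_t(μ̄_i) for T_i+1 ≤ t ≤ T_{i+1} where S_{T_{i+1}}(μ̄_i) = E. Then μ̄_i ∈ M_{i+1}, and consequently μ̄_{i+1} = sup M_{i+1} ≥ μ̄_i. -/
/-- Trajectory started at time t₀ from level s₀ and run at constant reference
price μ. -/
def stageTraj (xstar : ℕ → ℝ → ℝ) (t₀ : ℕ) (s₀ : ℝ) (t : ℕ) (μ : ℝ) : ℝ :=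
  s₀ + ∑ u ∈ Finset.Icc (t₀ + 1) t, xstar u μ

/-- The set of μ whose trajectory started at time t₀ from level s₀ first
violates the constraints from below. -/
def stageViolatesBelow (xstar : ℕ → ℝ → ℝ) (t₀ : ℕ) (s₀ E SstarT : ℝ) (T : ℕ) :
    Set ℝ :=
  {μ | ∃ T', t₀ + 1 ≤ T' ∧ T' ≤ T ∧
    (∀ t, t₀ + 1 ≤ t → t < T' →
      0 ≤ stageTraj xstar t₀ s₀ t μ ∧ stageTraj xstar t₀ s₀ t μ ≤ E) ∧
    (stageTraj xstar t₀ s₀ T' μ < 0 ∨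
      (T' = T ∧ stageTraj xstar t₀ s₀ T μ < SstarT))}

/-- Case (b) of the algorithm: if μ̄ᵢ = sup Mᵢ lies in Mᵢ with witness T' and the
trajectory reaches the full level E at a time Tᵢ₊₁ < T', then μ̄ᵢ ∈ Mᵢ₊₁ (the
violation set for the stage started at time Tᵢ₊₁ from level E), and hence
μ̄ᵢ₊₁ = sup Mᵢ₊₁ ≥ μ̄ᵢ. -/
theorem sup_increases_after_full
    (T : ℕ) (hT : 1 ≤ T) (E SstarT : ℝ) (hE : 0 < E)
    (xstar : ℕ → ℝ → ℝ)
    (hmono : ∀ t, 1 ≤ t → t ≤ T → Monotone (xstar t))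
    (hcont : ∀ t, 1 ≤ t → t ≤ T → Continuous (xstar t))
    (Ti : ℕ) (s₀ : ℝ) (μbar : ℝ)
    (hμbar : μbar = sSup (stageViolatesBelow xstar Ti s₀ E SstarT T))
    (T' : ℕ) (hT'1 : Ti + 1 ≤ T') (hT'T : T' ≤ T)
    (hfeas : ∀ t, Ti + 1 ≤ t → t < T' →
      0 ≤ stageTraj xstar Ti s₀ t μbar ∧ stageTraj xstar Ti s₀ t μbar ≤ E)
    (hviol : stageTraj xstar Ti s₀ T' μbar < 0 ∨
      (T' = T ∧ stageTraj xstar Ti s₀ T μbar < SstarT))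
    (Ti1 : ℕ) (hTi1 : Ti + 1 ≤ Ti1) (hTi1T' : Ti1 < T')
    (hfull : stageTraj xstar Ti s₀ Ti1 μbar = E) :
    μbar ∈ stageViolatesBelow xstar Ti1 E E SstarT T ∧
    (BddAbove (stageViolatesBelow xstar Ti1 E E SstarT T) →
      μbar ≤ sSup (stageViolatesBelow xstar Ti1 E E SstarT T)) := by
  have key : ∀ t, Ti1 ≤ t →
      stageTraj xstar Ti1 E t μbar = stageTraj xstar Ti s₀ t μbar := by
    intro t ht
    have hsplit : ∑ u ∈ Finset.Ioc Ti Ti1, xstar u μbar +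
        ∑ u ∈ Finset.Ioc Ti1 t, xstar u μbar =
        ∑ u ∈ Finset.Ioc Ti t, xstar u μbar :=
      Finset.sum_Ioc_consecutive _ (by omega) ht
    have hIcc : ∀ a b : ℕ, Finset.Icc (a + 1) b = Finset.Ioc a b := by
      intro a b; ext x; simp only [Finset.mem_Icc, Finset.mem_Ioc]; omega
    simp only [stageTraj, hIcc] at hfull ⊢
    rw [← hfull]
    linarith
  have hmem : μbar ∈ stageViolatesBelow xstar Ti1 E E SstarT T := by
    refine ⟨T', by omega, hT'T, ?_, ?_⟩
    · intro t ht1 ht2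
      rw [key t (by omega)]
      exact hfeas t (by omega) ht2
    · rw [key T' (by omega)]
      rcases hviol with h | ⟨h1, h2⟩
      · exact Or.inl h
      · exact Or.inr ⟨h1, by rw [key T (by omega)]; exact h2⟩
  exact ⟨hmem, fun hbdd => le_csSup hbdd hmem⟩
end
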